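/- Let p be a prime and let G be a group of exponent p, i.e. g^p = 1 for every g ∈ G. Let S ⊆ G be a finite minimal generating set, i.e. for every c ∈ S, c is not in the subgroup generated by S \ {c}; write N = |S| and let a ∈ S. Define the finitely supported function z_a : G × G → ℂ by z_a = Σ_{b ∈ S, b ≠ a} Σ_{0 ≤ i < p} ( δ_{((ab)^i, a)} + δ_{((ab)^i·a, b)} ), where δ_e denotes the indicator function of the pair e ∈ G × G. Then z_a(1, a) = N − 1 and Σ_{e ∈ G × G} |z_a(e)|² = (N−1)² + (N−1)(2p−1). -/

import Mathlib

/-- Let `G` be a group of prime exponent `p` with a finite minimal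
generating set `S`, `N = |S|`, and `a ∈ S`. The cycle `z_a`, the sum over `b ∈ S \ {a}` of
the cycles of the relations `(ab)^p` (edges encoded as pairs in `G × G`), satisfies
`z_a(1, a) = N − 1` and `Σ_e |z_a(e)|² = (N−1)² + (N−1)(2p−1)`. -/
theorem stmt_9 {G : Type*} [Group G] [DecidableEq G] (p : ℕ) (hp : p.Prime)
    (hexp : ∀ g : G, g ^ p = 1)
    (S : Finset G) (hgen : Subgroup.closure (S : Set G) = ⊤)
    (hmin : ∀ c ∈ S, c ∉ Subgroup.closure ((S.erase c : Finset G) : Set G))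
    (a : G) (ha : a ∈ S)
    (z : (G × G) →₀ ℂ)
    (hz : z = ∑ b ∈ S.erase a, ∑ i ∈ Finset.range p,
      (Finsupp.single ((a * b) ^ i, a) 1 + Finsupp.single ((a * b) ^ i * a, b) 1)) :
    z ((1 : G), a) = (S.card : ℂ) - 1 ∧
      (z.sum fun _ v => ‖v‖ ^ 2) =
        ((S.card : ℝ) - 1) ^ 2 + ((S.card : ℝ) - 1) * (2 * p - 1) := by
  haveI : Fact p.Prime := ⟨hp⟩
  have hp1 : 1 < p := hp.one_lt
  set E := S.erase a with hE
  -- every a*b for b ∈ E has order exactly p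
  have hord : ∀ b ∈ E, orderOf (a * b) = p := by
    intro b hb
    have hbS : b ∈ S := Finset.mem_of_mem_erase hb
    have hba : b ≠ a := Finset.ne_of_mem_erase hb
    refine orderOf_eq_prime (hexp _) ?_
    intro h1
    apply hmin b hbS
    have hb' : b = a⁻¹ := eq_inv_of_mul_eq_one_right h1
    have haE : a ∈ (↑(S.erase b) : Set G) := by
      simp only [Finset.coe_erase, Set.mem_diff, Set.mem_singleton_iff]
      exact ⟨ha, fun h => hba h.symm⟩
    have hmem : a⁻¹ ∈ Subgroup.closure (↑(S.erase b) : Set G) :=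
      inv_mem (Subgroup.subset_closure haE)
    rwa [← hb'] at hmem
  have hpowinj : ∀ b ∈ E, ∀ i < p, ∀ j < p, (a*b)^i = (a*b)^j → i = j := by
    intro b hb i hi j hj hij
    have h := hord b hb
    exact pow_injOn_Iio_orderOf (by rw [h]; exact hi) (by rw [h]; exact hj) hij
  have hpow_ne_one : ∀ b ∈ E, ∀ i, i ≠ 0 → i < p → (a*b)^i ≠ 1 := by
    intro b hb i hi0 hip h1
    have hd : orderOf (a*b) ∣ i := orderOf_dvd_iff_pow_eq_one.mpr h1
    rw [hord b hb] at hd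
    exact absurd (Nat.le_of_dvd (Nat.pos_of_ne_zero hi0) hd) (not_le.mpr hip)
  -- the key cross-generator injectivity
  have key : ∀ b ∈ E, ∀ b' ∈ E, ∀ i j : ℕ, j ≠ 0 → j < p →
      (a*b)^i = (a*b')^j → b = b' := by
    intro b hb b' hb' i j hj0 hjp heq
    by_contra hne
    have hbS : b ∈ S := Finset.mem_of_mem_erase hb
    have hb'S : b' ∈ S := Finset.mem_of_mem_erase hb'
    have hb'a : b' ≠ a := Finset.ne_of_mem_erase hb'
    have hcop : Nat.Coprime j p :=
      ((hp.coprime_iff_not_dvd).mpr (fun h =>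
        absurd (Nat.le_of_dvd (Nat.pos_of_ne_zero hj0) h) (not_le.mpr hjp))).symm
    obtain ⟨k, -, hk⟩ := Nat.exists_mul_mod_eq_one_of_coprime hcop hp1
    have h1 : a * b' = ((a*b)^i)^k := by
      have hx : (a*b')^(j*k) = a*b' := by
        conv_rhs => rw [← pow_one (a*b')]
        rw [← hk]
        conv_lhs => rw [← pow_mod_orderOf, hord b' hb']
      calc a*b' = (a*b')^(j*k) := hx.symm
        _ = ((a*b')^j)^k := by rw [pow_mul]
        _ = ((a*b)^i)^k := by rw [← heq]
    apply hmin b' hb'S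
    have haM : a ∈ Subgroup.closure (↑(S.erase b') : Set G) := by
      refine Subgroup.subset_closure ?_
      simp only [Finset.coe_erase, Set.mem_diff, Set.mem_singleton_iff]
      exact ⟨ha, fun h => hb'a h.symm⟩
    have hbM : b ∈ Subgroup.closure (↑(S.erase b') : Set G) := by
      refine Subgroup.subset_closure ?_
      simp only [Finset.coe_erase, Set.mem_diff, Set.mem_singleton_iff]
      exact ⟨hbS, fun h => hne h⟩
    have hb'eq : b' = a⁻¹ * ((a*b)^i)^k := by
      rw [← h1, inv_mul_cancel_left]
    have hmem2 : a⁻¹ * ((a*b)^i)^k ∈ Subgroup.closure (↑(S.erase b') : Set G) :=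
      mul_mem (inv_mem haM) (pow_mem (pow_mem (mul_mem haM hbM) i) k)
    rwa [← hb'eq] at hmem2
  -- pointwise evaluation of z
  have hzap : ∀ e : G × G, z e = ∑ b ∈ E, ∑ i ∈ Finset.range p,
      ((if ((a*b)^i, a) = e then (1:ℂ) else 0) + (if ((a*b)^i * a, b) = e then 1 else 0)) := by
    intro e
    rw [hz]
    rw [Finsupp.finset_sum_apply]
    refine Finset.sum_congr rfl fun b _ => ?_
    rw [Finsupp.finset_sum_apply]
    refine Finset.sum_congr rfl fun i _ => ?_
    simp [Finsupp.single_apply]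
  -- value at (1, a)
  have hz1 : z ((1:G), a) = (E.card : ℂ) := by
    rw [hzap]
    rw [Finset.sum_congr rfl (fun b hb => ?_), Finset.sum_const, nsmul_eq_mul, mul_one]
    have hba : b ≠ a := Finset.ne_of_mem_erase hb
    have : ∀ i ∈ Finset.range p,
        ((if ((a*b)^i, a) = ((1:G), a) then (1:ℂ) else 0)
          + (if ((a*b)^i * a, b) = ((1:G), a) then 1 else 0))
        = if i = 0 then 1 else 0 := by
      intro i hi
      rw [Finset.mem_range] at hi
      have h2 : ((a*b)^i * a, b) ≠ ((1:G), a) := by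
        simp only [ne_eq, Prod.mk.injEq, not_and]
        intro _ ; exact hba
      rw [if_neg h2, add_zero]
      by_cases h0 : i = 0
      · subst h0; simp
      · rw [if_neg h0, if_neg]
        simp only [ne_eq, Prod.mk.injEq, not_and]
        intro h1; exact absurd h1 (hpow_ne_one b hb i h0 hi)
    rw [Finset.sum_congr rfl this, Finset.sum_ite_eq' (Finset.range p) 0 (fun _ => (1:ℂ)),
      if_pos (Finset.mem_range.mpr (by omega))]
  -- the set of other edges
  set D : Finset (G × G) := E.biUnion (fun b =>
    ((Finset.range p).image fun i => ((a*b)^i * a, b)) ∪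
    (((Finset.range p).erase 0).image fun i => ((a*b)^i, a))) with hD
  have h1aD : ((1:G), a) ∉ D := by
    intro hmem
    rw [hD, Finset.mem_biUnion] at hmem
    obtain ⟨b, hb, h⟩ := hmem
    have hba : b ≠ a := Finset.ne_of_mem_erase hb
    rw [Finset.mem_union] at h
    rcases h with h | h <;> rw [Finset.mem_image] at h <;> obtain ⟨i, hi, hieq⟩ := h
    · exact hba (congrArg Prod.snd hieq)
    · rw [Finset.mem_erase, Finset.mem_range] at hi
      exact hpow_ne_one b hb i hi.1 hi.2 (congrArg Prod.fst hieq)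
  -- z takes value 1 on D
  have hzD : ∀ e ∈ D, z e = 1 := by
    intro e he
    simp only [hD, Finset.mem_biUnion, Finset.mem_union, Finset.mem_image, Finset.mem_range,
      Finset.mem_erase] at he
    obtain ⟨b₀, hb₀, hcase⟩ := he
    have hb₀a : b₀ ≠ a := Finset.ne_of_mem_erase hb₀
    rw [hzap]
    rcases hcase with ⟨i₀, hi₀, rfl⟩ | ⟨i₀, ⟨hi₀0, hi₀⟩, rfl⟩
    · -- e = ((a*b₀)^i₀ * a, b₀)
      rw [Finset.sum_eq_single_of_mem b₀ hb₀ (fun b hb hbne => ?_)]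
      · rw [Finset.sum_eq_single_of_mem i₀ (Finset.mem_range.mpr hi₀) (fun i hi hine => ?_)]
        · rw [if_neg, if_pos rfl]
          · norm_num
          · simp only [ne_eq, Prod.mk.injEq, not_and]
            intro _ ; exact fun h => hb₀a h.symm
        · rw [Finset.mem_range] at hi
          rw [if_neg, if_neg, add_zero]
          · simp only [ne_eq, Prod.mk.injEq, not_and]
            intro h _
            exact hine (hpowinj b₀ hb₀ i hi i₀ hi₀ (mul_right_cancel h))
          · simp only [ne_eq, Prod.mk.injEq, not_and]
            intro _ ; exact fun h => hb₀a h.symm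
      · refine Finset.sum_eq_zero fun i hi => ?_
        rw [Finset.mem_range] at hi
        rw [if_neg, if_neg, add_zero]
        · simp only [ne_eq, Prod.mk.injEq, not_and]
          intro _ ; exact hbne
        · simp only [ne_eq, Prod.mk.injEq, not_and]
          intro _ ; exact fun h => hb₀a h.symm
    · -- e = ((a*b₀)^i₀, a) with i₀ ≠ 0
      have hbne_a : ∀ b ∈ E, ∀ i, ((a*b)^i * a, b) ≠ ((a*b₀)^i₀, a) := by
        intro b hb i
        simp only [ne_eq, Prod.mk.injEq, not_and]
        intro _ ; exact Finset.ne_of_mem_erase hb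
      rw [Finset.sum_eq_single_of_mem b₀ hb₀ (fun b hb hbne => ?_)]
      · rw [Finset.sum_eq_single_of_mem i₀ (Finset.mem_range.mpr hi₀) (fun i hi hine => ?_)]
        · rw [if_pos rfl, if_neg (hbne_a b₀ hb₀ i₀)]
          norm_num
        · rw [Finset.mem_range] at hi
          rw [if_neg, if_neg (hbne_a b₀ hb₀ i), add_zero]
          simp only [ne_eq, Prod.mk.injEq, not_and]
          intro h _
          exact hine (hpowinj b₀ hb₀ i hi i₀ hi₀ h)
      · refine Finset.sum_eq_zero fun i hi => ?_
        rw [Finset.mem_range] at hi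
        rw [if_neg, if_neg (hbne_a b hb i), add_zero]
        simp only [ne_eq, Prod.mk.injEq, not_and]
        intro h _
        exact hbne (key b hb b₀ hb₀ i i₀ hi₀0 hi₀ h)
  -- support control
  have hsupp : z.support ⊆ insert ((1:G), a) D := by
    intro e he
    rw [Finsupp.mem_support_iff, hzap] at he
    by_contra hmem
    rw [Finset.mem_insert, not_or] at hmem
    obtain ⟨hne1, hneD⟩ := hmem
    apply he
    refine Finset.sum_eq_zero fun b hb => Finset.sum_eq_zero fun i hi => ?_
    rw [Finset.mem_range] at hi
    rw [if_neg, if_neg, add_zero]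
    · intro heq
      apply hneD
      simp only [hD, Finset.mem_biUnion]
      exact ⟨b, hb, Finset.mem_union_left _ (Finset.mem_image.mpr
        ⟨i, Finset.mem_range.mpr hi, heq⟩)⟩
    · intro heq
      by_cases h0 : i = 0
      · subst h0
        simp only [pow_zero] at heq
        exact hne1 heq.symm
      · apply hneD
        simp only [hD, Finset.mem_biUnion]
        exact ⟨b, hb, Finset.mem_union_right _ (Finset.mem_image.mpr
          ⟨i, Finset.mem_erase.mpr ⟨h0, Finset.mem_range.mpr hi⟩, heq⟩)⟩
  -- cardinality of D
  have hDcard : D.card = E.card * (p + (p - 1)) := by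
    rw [hD, Finset.card_biUnion, Finset.sum_congr rfl (fun b hb => ?_), Finset.sum_const,
      smul_eq_mul]
    · have hba : b ≠ a := Finset.ne_of_mem_erase hb
      rw [Finset.card_union_of_disjoint, Finset.card_image_of_injOn, Finset.card_image_of_injOn,
        Finset.card_range, Finset.card_erase_of_mem (Finset.mem_range.mpr (by omega)),
        Finset.card_range]
      · intro i hi j hj hij
        rw [Finset.mem_coe, Finset.mem_erase, Finset.mem_range] at hi hj
        exact hpowinj b hb i hi.2 j hj.2 (congrArg Prod.fst hij)
      · intro i hi j hj hij
        rw [Finset.mem_coe, Finset.mem_range] at hi hj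
        exact hpowinj b hb i hi j hj (mul_right_cancel (congrArg Prod.fst hij))
      · rw [Finset.disjoint_left]
        rintro x hx hx'
        rw [Finset.mem_image] at hx hx'
        obtain ⟨i, -, rfl⟩ := hx
        obtain ⟨j, -, hj⟩ := hx'
        exact hba (congrArg Prod.snd hj).symm
    · -- pairwise disjoint
      intro b hb b' hb' hne
      have hba : b ≠ a := Finset.ne_of_mem_erase hb
      have hb'a : b' ≠ a := Finset.ne_of_mem_erase hb'
      rw [Function.onFun_apply, Finset.disjoint_left]
      rintro x hx hx'
      rw [Finset.mem_union] at hx hx'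
      rcases hx with hx | hx <;> rcases hx' with hx' | hx' <;>
        rw [Finset.mem_image] at hx hx' <;>
        obtain ⟨i, hi, rfl⟩ := hx <;> obtain ⟨j, hj, hj'⟩ := hx'
      · exact hne (congrArg Prod.snd hj').symm
      · exact hba (congrArg Prod.snd hj').symm
      · exact hb'a (congrArg Prod.snd hj')
      · rw [Finset.mem_erase, Finset.mem_range] at hi
        exact hne (key b' hb' b hb j i hi.1 hi.2 (congrArg Prod.fst hj')).symm
  -- assemble
  have hcard : E.card = S.card - 1 := Finset.card_erase_of_mem ha
  have hS1 : 1 ≤ S.card := Finset.card_pos.mpr ⟨a, ha⟩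
  have hz1' : z ((1:G), a) = (S.card : ℂ) - 1 := by
    rw [hz1, hcard, Nat.cast_sub hS1, Nat.cast_one]
  refine ⟨hz1', ?_⟩
  rw [Finsupp.sum_of_support_subset z hsupp _ (fun _ _ => by simp),
    Finset.sum_insert h1aD, hz1']
  have hDsum : ∑ e ∈ D, ‖z e‖ ^ 2 = (D.card : ℝ) := by
    rw [Finset.sum_congr rfl (fun e he => by rw [hzD e he, norm_one, one_pow]),
      Finset.sum_const, nsmul_eq_mul, mul_one]
  rw [hDsum, hDcard, hcard]
  have hnorm : ‖(S.card : ℂ) - 1‖ ^ 2 = ((S.card : ℝ) - 1) ^ 2 := by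
    have : ((S.card : ℂ) - 1) = (((S.card : ℝ) - 1 : ℝ) : ℂ) := by push_cast; ring
    rw [this, Complex.norm_real, Real.norm_eq_abs, sq_abs]
  rw [hnorm]
  have hpc : ((p - 1 : ℕ) : ℝ) = (p : ℝ) - 1 := by
    rw [Nat.cast_sub (by omega), Nat.cast_one]
  push_cast [Nat.cast_sub hS1, hpc]
  ring
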